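/- arXiv:1911.00095 — 5 statements merged into one kernel-verified Lean document; each statement's English description precedes it below -/
import Mathlib

section
/- Let Z ∈ C and n ∈ 𝒩. Suppose e ∈ ℝ and, for each facet F' of Γ₊(f) (compact or noncompact) such that F_n ∩ F' is a one-dimensional segment, a nonnegative real c_{F'} is given, such that e·ℓ_n + Σ_{F'} c_{F'}·ℓ_{F'} = 0 as linear functionals on ℝ³. Then e·m_n(Z) + Σ_{F' compact} c_{F'}·m_{F'}(Z) ≤ 0, where the last sum runs over the compact facets F' adjacent to F_n. (This expresses that C is contained in the Lipman cone.) -/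
open Pointwise

noncomputable section

/-- The support of a power series: the set of exponent vectors with nonzero coefficient. -/
def psSupp (f : MvPowerSeries (Fin 3) ℂ) : Set (Fin 3 →₀ ℕ) :=
  {u | MvPowerSeries.coeff u f ≠ 0}

/-- Embedding of exponent vectors into `ℝ³`. -/
def expR (u : Fin 3 →₀ ℕ) : Fin 3 → ℝ := fun i => (u i : ℝ)

/-- The Newton polyhedron `Γ₊(f) = conv(supp f + ℝ³₊)`. -/
def newtonPolyhedron (f : MvPowerSeries (Fin 3) ℂ) : Set (Fin 3 → ℝ) :=
  convexHull ℝ ((expR '' psSupp f) + {v : Fin 3 → ℝ | ∀ i, 0 ≤ v i})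

/-- Evaluation of an integral linear functional on `ℝ³`. -/
def leval (l : Fin 3 → ℤ) (x : Fin 3 → ℝ) : ℝ := ∑ i, (l i : ℝ) * x i

/-- A primitive integral vector: its coordinates have no nonunit common divisor. -/
def Primitive (l : Fin 3 → ℤ) : Prop := ∀ d : ℤ, (∀ i, d ∣ l i) → IsUnit d

/-- The set of minimizers of the functional `l` on `P`. -/
def minSet (l : Fin 3 → ℤ) (P : Set (Fin 3 → ℝ)) : Set (Fin 3 → ℝ) :=
  {x ∈ P | ∀ y ∈ P, leval l x ≤ leval l y}

/-- A compact facet of `P`: a compact two-dimensional exposed face. -/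
def IsCompactFacet (P F : Set (Fin 3 → ℝ)) : Prop :=
  IsExposed ℝ P F ∧ IsCompact F ∧ Module.finrank ℝ (vectorSpan ℝ F) = 2

/-- A facet of `P`: a two-dimensional exposed face (possibly noncompact). -/
def IsFacet (P F : Set (Fin 3 → ℝ)) : Prop :=
  IsExposed ℝ P F ∧ Module.finrank ℝ (vectorSpan ℝ F) = 2

/-- Adjacency: two faces are adjacent iff their intersection is a one-dimensional segment. -/
def SegAdj (F F' : Set (Fin 3 → ℝ)) : Prop :=
  Module.finrank ℝ (vectorSpan ℝ (F ∩ F')) = 1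

/-- `𝒩_A`: the set of vertices lying in `A` or adjacent (in the dual graph `Ḡ`)
to a vertex of `A`. -/
def nbhd {N : Type} (FF : N → Set (Fin 3 → ℝ)) (A : Set N) : Set N :=
  {n | n ∈ A ∨ ∃ a ∈ A, SegAdj (FF n) (FF a)}

/-- `Γ₊(Z) = {u ∈ ℝ³₊ : ℓ_n(u) ≥ m_n(Z) for all n ∈ 𝒩}`. -/
def GammaZ {N : Type} (ll : N → Fin 3 → ℤ) (Z : N → ℝ) : Set (Fin 3 → ℝ) :=
  {x | (∀ i, 0 ≤ x i) ∧ ∀ n, Z n ≤ leval (ll n) x}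

/-- `F_n(Z)`, the face of `Γ₊(Z)` where `ℓ_n = m_n(Z)`. -/
def FZ {N : Type} (ll : N → Fin 3 → ℤ) (Z : N → ℝ) (n : N) : Set (Fin 3 → ℝ) :=
  {x ∈ GammaZ ll Z | leval (ll n) x = Z n}

/-- `Γ₊^A(Z) = {u ∈ ℝ³₊ : ℓ_n(u) ≥ m_n(Z) for all n ∈ 𝒩_A}`. -/
def GammaZA {N : Type} (FF : N → Set (Fin 3 → ℝ)) (ll : N → Fin 3 → ℤ) (Z : N → ℝ)
    (A : Set N) : Set (Fin 3 → ℝ) :=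
  {x | (∀ i, 0 ≤ x i) ∧ ∀ n ∈ nbhd FF A, Z n ≤ leval (ll n) x}

/-- `F_a^A(Z)`, the face of `Γ₊^A(Z)` where `ℓ_a = m_a(Z)`. -/
def FZA {N : Type} (FF : N → Set (Fin 3 → ℝ)) (ll : N → Fin 3 → ℤ) (Z : N → ℝ)
    (A : Set N) (a : N) : Set (Fin 3 → ℝ) :=
  {x ∈ GammaZA FF ll Z A | leval (ll a) x = Z a}

/-- Membership in the cone `C`: (i) for every `n`, `F_n^{{n}}(Z) = F_n(Z) ≠ ∅`;
(ii) whenever `n, n'` are adjacent and `ρ·(F_n(f) ∩ F_{n'}(f)) + u ⊆ F_n(Z) ∩ F_{n'}(Z)`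
for some `ρ ≥ 0`, `u ∈ ℝ³`, then `ρ·F_n(f) + u ⊆ F_n(Z)`. -/
def memC {N : Type} (FF : N → Set (Fin 3 → ℝ)) (ll : N → Fin 3 → ℤ) (Z : N → ℝ) : Prop :=
  (∀ n, (FZ ll Z n).Nonempty ∧ FZA FF ll Z {n} n = FZ ll Z n) ∧
  (∀ n n', SegAdj (FF n) (FF n') → ∀ ρ : ℝ, 0 ≤ ρ → ∀ u : Fin 3 → ℝ,
     (fun x => ρ • x + u) '' (FF n ∩ FF n') ⊆ FZ ll Z n ∩ FZ ll Z n' →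
     (fun x => ρ • x + u) '' (FF n) ⊆ FZ ll Z n)

/-- Let `Z ∈ C` and `n ∈ 𝒩`. Suppose `e ∈ ℝ` and, for each facet `F'` of
`Γ₊(f)` (compact or noncompact) such that `F_n ∩ F'` is a one-dimensional segment, a
nonnegative real `c_{F'}` is given, such that `e·ℓ_n + Σ_{F'} c_{F'}·ℓ_{F'} = 0` as linear
functionals on `ℝ³`.  Then `e·m_n(Z) + Σ_{F' compact} c_{F'}·m_{F'}(Z) ≤ 0`.
The compact facets are enumerated by the finite type `N` (via `FF`), the noncompact
facets adjacent to `F_n` by the finite type `J` (via `G`); the coefficients `c_{F'}` are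
given by `c : N → ℝ` (vanishing on non-adjacent compact facets) and `d : J → ℝ`. -/
theorem cone_C_in_Lipman_cone
    (f : MvPowerSeries (Fin 3) ℂ) (hf : f ≠ 0)
    (N : Type) [Fintype N]
    (FF : N → Set (Fin 3 → ℝ)) (ll : N → Fin 3 → ℤ)
    (hfacet : ∀ n, IsCompactFacet (newtonPolyhedron f) (FF n))
    (hinj : Function.Injective FF)
    (hsurj : ∀ G', IsCompactFacet (newtonPolyhedron f) G' → ∃ n, FF n = G')
    (hprim : ∀ n, Primitive (ll n))
    (hpos : ∀ n i, 0 < ll n i)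
    (hmin : ∀ n, minSet (ll n) (newtonPolyhedron f) = FF n)
    (Z : N → ℝ) (hZ : memC FF ll Z) (n : N)
    (J : Type) [Fintype J]
    (G : J → Set (Fin 3 → ℝ)) (ll' : J → Fin 3 → ℤ)
    (hGfacet : ∀ j, IsFacet (newtonPolyhedron f) (G j))
    (hGnc : ∀ j, ¬ IsCompact (G j))
    (hGadj : ∀ j, SegAdj (FF n) (G j))
    (hGinj : Function.Injective G)
    (hGall : ∀ G', IsFacet (newtonPolyhedron f) G' → ¬ IsCompact G' →
      SegAdj (FF n) G' → ∃ j, G j = G')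
    (hprim' : ∀ j, Primitive (ll' j))
    (hnn' : ∀ j i, 0 ≤ ll' j i)
    (hmin' : ∀ j, minSet (ll' j) (newtonPolyhedron f) = G j)
    (e : ℝ) (c : N → ℝ) (d : J → ℝ)
    (hcnn : ∀ n', 0 ≤ c n') (hdnn : ∀ j, 0 ≤ d j)
    (hc0 : ∀ n', ¬ SegAdj (FF n) (FF n') → c n' = 0)
    (hlin : ∀ x : Fin 3 → ℝ,
      e * leval (ll n) x + (∑ n', c n' * leval (ll n') x) + (∑ j, d j * leval (ll' j) x) = 0) :
    e * Z n + ∑ n', c n' * Z n' ≤ 0 := by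
  obtain ⟨⟨x, hx⟩, -⟩ := (hZ.1 n)
  obtain ⟨⟨hxnn, hxge⟩, hxn⟩ := hx
  have key := hlin x
  have h1 : e * Z n = e * leval (ll n) x := by rw [hxn]
  have h2 : ∑ n', c n' * Z n' ≤ ∑ n', c n' * leval (ll n') x :=
    Finset.sum_le_sum fun n' _ => mul_le_mul_of_nonneg_left (hxge n') (hcnn n')
  have h3 : 0 ≤ ∑ j, d j * leval (ll' j) x := by
    apply Finset.sum_nonneg
    intro j _
    apply mul_nonneg (hdnn j)
    apply Finset.sum_nonneg
    intro i _
    exact mul_nonneg (by exact_mod_cast hnn' j i) (hxnn i)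
  linarith
end
end

section
/- Let A ≅ ℝ² be an affine plane and ℓ₀, …, ℓ_s affine functions on A. Let P and Q be polygons given by the inequalities ℓ_i ≥ p_i and ℓ_i ≥ q_i respectively (i = 0, …, s), in such a way that p_i = min_P ℓ_i and q_i = min_Q ℓ_i; let P_i and Q_i be the sets of minimizers of ℓ_i on P and Q respectively. Assume Q ⊆ P and that Q₀ = P₀ is a segment of positive length. Take p₀' < p₀ such that the polygon P' defined by the inequalities ℓ₀ ≥ p₀' and ℓ_i ≥ p_i for i > 0 satisfies p₀' = min_{P'} ℓ₀, and such that the minimizer set P₀' of ℓ₀ on P' is a segment of positive length. Let φ : A → A be the unique direction-preserving affine isomorphism (a map of the form x ↦ ρ·x + u with ρ > 0, i.e. a homothety or translation) with φ(P₀) = P₀'. Then φ(Q) ⊆ P'. -/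
noncomputable section

/-- The polygon in the plane `ℝ²` cut out by the affine inequalities `ℓ i ≥ p i`. -/
def polyRegion {s : ℕ} (l : Fin (s + 1) → ((Fin 2 → ℝ) →ᵃ[ℝ] ℝ)) (p : Fin (s + 1) → ℝ) :
    Set (Fin 2 → ℝ) :=
  {x | ∀ i, p i ≤ l i x}

/-- The set of minimizers of `ℓ i` on the polygon cut out by `ℓ ≥ p`
(assuming `p i` is the minimal value of `ℓ i` there). -/
def polyFace {s : ℕ} (l : Fin (s + 1) → ((Fin 2 → ℝ) →ᵃ[ℝ] ℝ)) (p : Fin (s + 1) → ℝ)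
    (i : Fin (s + 1)) : Set (Fin 2 → ℝ) :=
  {x ∈ polyRegion l p | l i x = p i}

theorem affdiff (g : (Fin 2 → ℝ) →ᵃ[ℝ] ℝ) (z w : Fin 2 → ℝ) :
    g.linear (z - w) = g z - g w := by
  have h := g.map_vadd w (z - w)
  simp [vadd_eq_add, sub_add_cancel] at h
  rw [map_sub]
  linarith

theorem affcomb (g : (Fin 2 → ℝ) →ᵃ[ℝ] ℝ) (c₁ c₂ : ℝ) (z w : Fin 2 → ℝ) (h : c₁ + c₂ = 1) :
    g (c₁ • z + c₂ • w) = c₁ * g z + c₂ * g w := by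
  have hv : c₁ • z + c₂ • w = (c₁ • (z - w)) +ᵥ w := by
    funext j
    simp only [Pi.add_apply, Pi.smul_apply, Pi.sub_apply, smul_eq_mul, vadd_eq_add]
    linear_combination w j * h
  rw [hv, g.map_vadd]
  have h2 := affdiff g z w
  simp only [vadd_eq_add, map_smul, smul_eq_mul, h2]
  linear_combination -(g w) * h

theorem polyRegion_convex {s : ℕ} (l : Fin (s + 1) → ((Fin 2 → ℝ) →ᵃ[ℝ] ℝ))
    (pp : Fin (s + 1) → ℝ) : Convex ℝ (polyRegion l pp) := by
  intro x hx y hy cu cv hcu hcv hsum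
  intro i
  have h1 := hx i
  have h2 := hy i
  have key := affcomb (l i) cu cv x y hsum
  rw [key]
  have hpp : cu * pp i + cv * pp i = pp i := by linear_combination pp i * hsum
  nlinarith [mul_le_mul_of_nonneg_left h1 hcu, mul_le_mul_of_nonneg_left h2 hcv]

theorem cramer2 (e g v : Fin 2 → ℝ) :
    (e 0 * g 1 - e 1 * g 0) • v
      = (v 0 * g 1 - v 1 * g 0) • e + (e 0 * v 1 - e 1 * v 0) • g := by
  funext j
  fin_cases j <;>
    simp only [Fin.isValue, Pi.smul_apply, Pi.add_apply, smul_eq_mul, Fin.zero_eta, Fin.mk_one] <;>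
    ring

/-- Let `A = ℝ²` and `ℓ₀, …, ℓ_s` affine functions on `A`.  Let `P` and `Q`
be polygons given by `ℓ_i ≥ p_i` resp. `ℓ_i ≥ q_i` with `p_i = min_P ℓ_i`, `q_i = min_Q ℓ_i`,
with minimizer sets `P_i`, `Q_i`.  Assume `Q ⊆ P` and `Q₀ = P₀` is a segment of positive
length.  Take `p₀' < p₀` so that the polygon `P'` given by `ℓ₀ ≥ p₀'`, `ℓ_i ≥ p_i` (`i > 0`)
satisfies `p₀' = min_{P'} ℓ₀` and its minimizer set `P₀'` is a segment of positive length.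
If `φ : x ↦ ρ·x + u` (with `ρ > 0`) is a direction-preserving affine isomorphism with
`φ(P₀) = P₀'`, then `φ(Q) ⊆ P'`. -/
theorem homothety_polygon_lemma
    (s : ℕ) (l : Fin (s + 1) → ((Fin 2 → ℝ) →ᵃ[ℝ] ℝ))
    (p q : Fin (s + 1) → ℝ)
    (hPcompact : IsCompact (polyRegion l p))
    (hQcompact : IsCompact (polyRegion l q))
    (hpmin : ∀ i, ∃ x ∈ polyRegion l p, l i x = p i)
    (hqmin : ∀ i, ∃ x ∈ polyRegion l q, l i x = q i)
    (hQP : polyRegion l q ⊆ polyRegion l p)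
    (hP0seg : ∃ a b : Fin 2 → ℝ, a ≠ b ∧ polyFace l p 0 = segment ℝ a b)
    (hQ0 : polyFace l q 0 = polyFace l p 0)
    (p0' : ℝ) (hp0' : p0' < p 0)
    (hP'compact : IsCompact (polyRegion l (Function.update p 0 p0')))
    (hP'min : ∃ x ∈ polyRegion l (Function.update p 0 p0'), l 0 x = p0')
    (hP0'seg : ∃ a b : Fin 2 → ℝ, a ≠ b ∧
      polyFace l (Function.update p 0 p0') 0 = segment ℝ a b)
    (ρ : ℝ) (hρ : 0 < ρ) (u : Fin 2 → ℝ)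
    (hφ : (fun x => ρ • x + u) '' polyFace l p 0 = polyFace l (Function.update p 0 p0') 0) :
    (fun x => ρ • x + u) '' polyRegion l q ⊆ polyRegion l (Function.update p 0 p0') := by
  classical
  obtain ⟨a, b, hab, hPface⟩ := hP0seg
  set p' : Fin (s + 1) → ℝ := Function.update p 0 p0' with hp'def
  have hp'0 : p' 0 = p0' := Function.update_self _ _ _
  have hp'ne : ∀ i : Fin (s + 1), i ≠ 0 → p' i = p i := fun i hi => Function.update_of_ne hi _ _
  obtain ⟨δ, hδdef⟩ : ∃ δ : ℝ, δ = p 0 - p0' := ⟨_, rfl⟩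
  have hδ : 0 < δ := by rw [hδdef]; linarith
  -- memberships of a, b and their images
  have haF : a ∈ polyFace l p 0 := by rw [hPface]; exact left_mem_segment ℝ a b
  have hbF : b ∈ polyFace l p 0 := by rw [hPface]; exact right_mem_segment ℝ a b
  have haP : a ∈ polyRegion l p := haF.1
  have hla : l 0 a = p 0 := haF.2
  have hlb : l 0 b = p 0 := hbF.2
  obtain ⟨a', ha'def⟩ : ∃ a' : Fin 2 → ℝ, a' = ρ • a + u := ⟨_, rfl⟩
  obtain ⟨b', hb'def⟩ : ∃ b' : Fin 2 → ℝ, b' = ρ • b + u := ⟨_, rfl⟩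
  have ha'F : a' ∈ polyFace l p' 0 := by rw [← hφ]; exact ⟨a, haF, ha'def.symm⟩
  have hb'F : b' ∈ polyFace l p' 0 := by rw [← hφ]; exact ⟨b, hbF, hb'def.symm⟩
  have ha'P : a' ∈ polyRegion l p' := ha'F.1
  have hb'P : b' ∈ polyRegion l p' := hb'F.1
  have hla' : l 0 a' = p0' := by rw [ha'F.2, hp'0]
  have hlb' : l 0 b' = p0' := by rw [hb'F.2, hp'0]
  -- the linear part of l 0
  obtain ⟨n, hndef⟩ : ∃ n : (Fin 2 → ℝ) →ₗ[ℝ] ℝ, n = (l 0).linear := ⟨_, rfl⟩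
  have hnd : ∀ z w : Fin 2 → ℝ, n (z - w) = l 0 z - l 0 w := fun z w => by
    rw [hndef]; exact affdiff (l 0) z w
  -- the shear vector f
  obtain ⟨f, hfdef⟩ : ∃ f : Fin 2 → ℝ, f = δ⁻¹ • (a - a') := ⟨_, rfl⟩
  have hδf : δ • f = a - a' := by
    rw [hfdef, smul_smul, mul_inv_cancel₀ (ne_of_gt hδ), one_smul]
  have hnf : n f = 1 := by
    rw [hfdef, map_smul, hnd a a', hla, hla', smul_eq_mul, ← hδdef]
    field_simp
  have hnba : n (b - a) = 0 := by rw [hnd, hla, hlb, sub_self]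
  have hnaa' : n (a - a') = δ := by rw [hnd, hla, hla', ← hδdef]
  -- the determinant functional
  obtain ⟨Df, hDdef⟩ : ∃ Df : (Fin 2 → ℝ) → ℝ, Df = fun v => v 0 * f 1 - v 1 * f 0 := ⟨_, rfl⟩
  have hDadd : ∀ v w, Df (v + w) = Df v + Df w := by
    intro v w; simp only [hDdef, Pi.add_apply]; ring
  have hDsub : ∀ v w, Df (v - w) = Df v - Df w := by
    intro v w; simp only [hDdef, Pi.sub_apply]; ring
  have hDsmul : ∀ (c : ℝ) v, Df (c • v) = c * Df v := by
    intro c v; simp only [hDdef, Pi.smul_apply, smul_eq_mul]; ring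
  have hDff : Df f = 0 := by simp only [hDdef]; ring
  obtain ⟨K, hKdef⟩ : ∃ K : ℝ, K = Df (b - a) := ⟨_, rfl⟩
  have hK : K ≠ 0 := by
    intro h0
    have heb : b - a ≠ 0 := sub_ne_zero.mpr (Ne.symm hab)
    rw [hKdef] at h0
    simp only [hDdef, Pi.sub_apply] at h0
    have hv1 : f 1 • (b - a) - (b - a) 1 • f = 0 := by
      funext j
      fin_cases j <;>
        simp only [Fin.isValue, Pi.sub_apply, Pi.smul_apply, smul_eq_mul, Pi.zero_apply,
          Fin.zero_eta, Fin.mk_one] <;>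
        first
          | linear_combination -h0
          | linear_combination h0
          | ring
    have hv0 : f 0 • (b - a) - (b - a) 0 • f = 0 := by
      funext j
      fin_cases j <;>
        simp only [Fin.isValue, Pi.sub_apply, Pi.smul_apply, smul_eq_mul, Pi.zero_apply,
          Fin.zero_eta, Fin.mk_one] <;>
        first
          | linear_combination -h0
          | linear_combination h0
          | ring
    have hc1 : (b - a) 1 = 0 := by
      have hcal := congrArg n hv1
      simp only [map_sub, map_smul, smul_eq_mul, hnba, hnf, mul_zero, mul_one, map_zero,
        zero_sub] at hcal
      linarith
    have hc0 : (b - a) 0 = 0 := by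
      have hcal := congrArg n hv0
      simp only [map_sub, map_smul, smul_eq_mul, hnba, hnf, mul_zero, mul_one, map_zero,
        zero_sub] at hcal
      linarith
    refine heb (funext fun j => ?_)
    fin_cases j
    · simpa using hc0
    · simpa using hc1
  have cram : ∀ v : Fin 2 → ℝ, K • v = Df v • (b - a) + (K * n v) • f := by
    intro v
    have h1 : K • v = Df v • (b - a) + ((b - a) 0 * v 1 - (b - a) 1 * v 0) • f := by
      simp only [hKdef, hDdef]
      exact cramer2 (b - a) f v
    have h3 := congrArg n h1
    simp only [map_add, map_smul, smul_eq_mul, hnba, hnf, mul_zero, mul_one, zero_add] at h3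
    rw [h1, h3]
  have inj : ∀ v : Fin 2 → ℝ, Df v = 0 → n v = 0 → v = 0 := by
    intro v h1 h2
    have h3 := cram v
    rw [h1, h2, mul_zero, zero_smul, zero_smul, add_zero] at h3
    exact (smul_eq_zero.mp h3).resolve_left hK
  -- basic Df values
  have hDaa2 : Df (a - a') = 0 := by rw [← hδf, hDsmul, hDff, mul_zero]
  have hDaa' : Df (a' - a) = 0 := by
    have h : a' - a = (-δ) • f := by rw [neg_smul, hδf, neg_sub]
    rw [h, hDsmul, hDff, mul_zero]
  have hb'a' : b' - a' = ρ • (b - a) := by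
    rw [ha'def, hb'def]
    funext j
    simp only [Pi.sub_apply, Pi.add_apply, Pi.smul_apply, smul_eq_mul]
    ring
  have hDb'a' : Df (b' - a') = ρ * K := by rw [hb'a', hDsmul, ← hKdef]
  -- P ⊆ P'
  have hPsub : polyRegion l p ⊆ polyRegion l p' := by
    intro z hz i
    by_cases hi : i = 0
    · subst hi; rw [hp'0]; have := hz 0; linarith
    · rw [hp'ne i hi]; exact hz i
  have hconv' : Convex ℝ (polyRegion l p') := polyRegion_convex l p'
  -- maximality of the face of P at level p 0
  have hfaceP' : ∀ z ∈ polyRegion l p', l 0 z = p 0 → z ∈ segment ℝ a b := by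
    intro z hz hz0
    rw [← hPface]
    refine ⟨fun i => ?_, hz0⟩
    by_cases hi : i = 0
    · subst hi; rw [hz0]
    · rw [← hp'ne i hi]; exact hz i
  -- extracting the coefficient from a segment membership
  have segc : ∀ z ∈ segment ℝ a b, ∃ c : ℝ, 0 ≤ c ∧ c ≤ 1 ∧ Df (z - a) = c * K := by
    intro z hz
    obtain ⟨cu, cv, hcu, hcv, hsum, heq⟩ := hz
    refine ⟨cv, hcv, by linarith, ?_⟩
    have hza : z - a = cv • (b - a) := by
      funext j
      have hj := congrFun heq j
      simp only [Pi.add_apply, Pi.smul_apply, smul_eq_mul] at hj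
      simp only [Pi.sub_apply, Pi.smul_apply, smul_eq_mul]
      linear_combination (-1 : ℝ) * hj + a j * hsum
    rw [hza, hDsmul, ← hKdef]
  -- THE WEDGE LEMMA : every point of P lies in the wedge over the segment [a', b']
  have wedge : ∀ z ∈ polyRegion l p, 0 ≤ Df (z - a) / K ∧
      ρ * (l 0 z - p 0) + δ * (Df (z - a) / K) ≤ l 0 z - p0' := by
    intro z hz
    have htz : p 0 ≤ l 0 z := hz 0
    have hpos : 0 < l 0 z - p0' := by linarith
    obtain ⟨s', hs'def⟩ : ∃ s' : ℝ, s' = δ / (l 0 z - p0') := ⟨_, rfl⟩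
    have hs'0 : 0 < s' := by rw [hs'def]; exact div_pos hδ hpos
    have hs'1 : s' ≤ 1 := by
      rw [hs'def, div_le_one hpos]
      rw [hδdef]; linarith
    have hs'e : s' * (l 0 z - p0') = δ := by rw [hs'def]; field_simp
    have hzP' : z ∈ polyRegion l p' := hPsub hz
    constructor
    · -- left wedge via a'
      have hz1 : (1 - s') • a' + s' • z ∈ polyRegion l p' :=
        hconv' ha'P hzP' (by linarith) (le_of_lt hs'0) (by ring)
      have hl1 : l 0 ((1 - s') • a' + s' • z) = p 0 := by
        rw [affcomb (l 0) _ _ _ _ (by ring : (1 - s') + s' = 1), hla']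
        linear_combination hs'e + hδdef
      obtain ⟨c, hc0, hc1, hcD⟩ := segc _ (hfaceP' _ hz1 hl1)
      have hsplit : ((1 - s') • a' + s' • z) - a = (1 - s') • (a' - a) + s' • (z - a) := by
        funext j
        simp only [Pi.sub_apply, Pi.add_apply, Pi.smul_apply, smul_eq_mul]
        ring
      rw [hsplit, hDadd, hDsmul, hDsmul, hDaa', mul_zero, zero_add] at hcD
      -- hcD : s' * Df (z - a) = c * K
      have hqq : Df (z - a) / K = c / s' := by
        rw [div_eq_div_iff hK (ne_of_gt hs'0)]
        linear_combination hcD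
      rw [hqq]
      positivity
    · -- right wedge via b'
      have hz2 : (1 - s') • b' + s' • z ∈ polyRegion l p' :=
        hconv' hb'P hzP' (by linarith) (le_of_lt hs'0) (by ring)
      have hl2 : l 0 ((1 - s') • b' + s' • z) = p 0 := by
        rw [affcomb (l 0) _ _ _ _ (by ring : (1 - s') + s' = 1), hlb']
        linear_combination hs'e + hδdef
      obtain ⟨c, hc0, hc1, hcD⟩ := segc _ (hfaceP' _ hz2 hl2)
      have hsplit : ((1 - s') • b' + s' • z) - a
          = (1 - s') • (b' - a') + (1 - s') • (a' - a) + s' • (z - a) := by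
        funext j
        simp only [Pi.sub_apply, Pi.add_apply, Pi.smul_apply, smul_eq_mul]
        ring
      rw [hsplit, hDadd, hDadd, hDsmul, hDsmul, hDsmul, hDaa', hDb'a', mul_zero, add_zero] at hcD
      -- hcD : (1 - s') * (ρ * K) + s' * Df (z - a) = c * K
      have hcT : (1 - s') * ρ + s' * (Df (z - a) / K) = c := by
        field_simp
        linear_combination hcD
      have h1s : (1 - s') * (l 0 z - p0') = l 0 z - p 0 := by
        linear_combination -hs'e - hδdef
      have hfin : (l 0 z - p0') * c = ρ * (l 0 z - p 0) + δ * (Df (z - a) / K) := by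
        linear_combination -(l 0 z - p0') * hcT + ρ * h1s + (Df (z - a) / K) * hs'e
      have hle := mul_le_mul_of_nonneg_left hc1 (le_of_lt hpos)
      rw [mul_one] at hle
      linarith
  -- q 0 = p 0
  have hq0 : q 0 = p 0 := by
    obtain ⟨w0, hw0Q, hw0l⟩ := hqmin 0
    have hw0F : w0 ∈ polyFace l q 0 := ⟨hw0Q, hw0l⟩
    rw [hQ0] at hw0F
    rw [← hw0l, hw0F.2]
  -- MAIN ARGUMENT
  rintro - ⟨x, hxQ, rfl⟩
  show ρ • x + u ∈ polyRegion l p'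
  have hxP : x ∈ polyRegion l p := hQP hxQ
  have ht : p 0 ≤ l 0 x := by have := hxQ 0; rw [hq0] at this; exact this
  -- value of l 0 at the image point
  have hvφa : (ρ • x + u) - a' = ρ • (x - a) := by
    rw [ha'def]
    funext j
    simp only [Pi.sub_apply, Pi.add_apply, Pi.smul_apply, smul_eq_mul]
    ring
  have hlφ : l 0 (ρ • x + u) = p0' + ρ * (l 0 x - p 0) := by
    have h1 := hnd (ρ • x + u) a'
    rw [hvφa, map_smul, smul_eq_mul, hnd x a, hla, hla'] at h1
    linarith
  rcases eq_or_lt_of_le ht with hteq | htlt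
  · -- x lies on the face P₀ : its image is on the face P₀' ⊆ P'
    have hxF : x ∈ polyFace l p 0 := ⟨hxP, hteq.symm⟩
    have himg : ρ • x + u ∈ polyFace l p' 0 := by rw [← hφ]; exact ⟨x, hxF, rfl⟩
    exact himg.1
  · obtain ⟨hS0, hSw⟩ := wedge x hxP
    obtain ⟨t, htdef⟩ : ∃ t : ℝ, t = l 0 x := ⟨_, rfl⟩
    obtain ⟨Sx, hSxdef⟩ : ∃ Sx : ℝ, Sx = Df (x - a) / K := ⟨_, rfl⟩
    rw [← hSxdef] at hS0 hSw
    rw [← htdef] at hSw htlt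
    have htlt' : p 0 < t := htlt
    have hDfx : Df (x - a) = Sx * K := by rw [hSxdef]; field_simp
    obtain ⟨Δ, hΔdef⟩ : ∃ Δ : ℝ, Δ = δ + (1 - ρ) * (t - p 0) := ⟨_, rfl⟩
    have hΔSx : δ * Sx ≤ Δ := by
      rw [hΔdef]
      rw [hδdef] at hSw ⊢
      linarith
    have hΔ0 : 0 ≤ Δ := le_trans (mul_nonneg (le_of_lt hδ) hS0) hΔSx
    have hvφx : (ρ • x + u) - x = (ρ - 1) • (x - a) + (a' - a) := by
      rw [ha'def]
      funext j
      simp only [Pi.sub_apply, Pi.add_apply, Pi.smul_apply, smul_eq_mul]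
      ring
    have hDφx : Df ((ρ • x + u) - x) = (ρ - 1) * (Sx * K) := by
      rw [hvφx, hDadd, hDsmul, hDaa', add_zero, hDfx]
    have hnφx : n ((ρ • x + u) - x) = -Δ := by
      rw [hnd, hlφ, ← htdef, hΔdef, hδdef]
      ring
    rcases eq_or_lt_of_le hΔ0 with hΔz | hΔpos
    · -- degenerate case : φ fixes x
      have hz1 : δ * Sx = 0 :=
        le_antisymm (hΔz ▸ hΔSx) (mul_nonneg (le_of_lt hδ) hS0)
      have hSx0 : Sx = 0 := (mul_eq_zero.mp hz1).resolve_left (ne_of_gt hδ)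
      have hD1 : Df ((ρ • x + u) - x) = 0 := by rw [hDφx, hSx0]; ring
      have hn1 : n ((ρ • x + u) - x) = 0 := by rw [hnφx, ← hΔz]; ring
      have hfix : ρ • x + u = x := sub_eq_zero.mp (inj _ hD1 hn1)
      rw [hfix]
      exact hPsub hxP
    · -- main case
      obtain ⟨μ, hμdef⟩ : ∃ μ : ℝ, μ = (t - p0') / Δ := ⟨_, rfl⟩
      obtain ⟨lam, hlamdef⟩ : ∃ lam : ℝ, lam = ρ * δ * Sx / Δ := ⟨_, rfl⟩
      have hkey : Δ + (ρ - 1) * (t - p0') = ρ * δ := by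
        rw [hΔdef, hδdef]; ring
      have hkey2 : t - p0' - Δ = ρ * (t - p 0) := by
        rw [hΔdef, hδdef]; ring
      have hμ1 : 1 ≤ μ := by
        rw [hμdef, le_div_iff₀ hΔpos, one_mul]
        have hmul : 0 < ρ * (t - p 0) := mul_pos hρ (sub_pos.mpr htlt')
        linarith [hkey2]
      have hμpos : 0 < μ := lt_of_lt_of_le one_pos hμ1
      obtain ⟨y, hydef⟩ : ∃ y : Fin 2 → ℝ, y = x + μ • ((ρ • x + u) - x) := ⟨_, rfl⟩
      obtain ⟨yc, hycdef⟩ : ∃ yc : Fin 2 → ℝ, yc = (1 - lam / ρ) • a' + (lam / ρ) • b' := ⟨_, rfl⟩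
      -- y = yc
      have hvv : y - yc = (1 + μ * (ρ - 1)) • (x - a) + (1 - μ) • (a - a') - lam • (b - a) := by
        have hbb : lam • (b - a) = (lam / ρ) • (b' - a') := by
          rw [hb'a', smul_smul, div_mul_cancel₀ _ (ne_of_gt hρ)]
        rw [hbb, hydef, hycdef, hvφx]
        funext j
        simp only [Pi.sub_apply, Pi.add_apply, Pi.smul_apply, smul_eq_mul]
        ring
      have hDv : Df (y - yc) = 0 := by
        rw [hvv, hDsub, hDadd, hDsmul, hDsmul, hDsmul, hDfx, hDaa2, mul_zero, add_zero,
          ← hKdef, hμdef, hlamdef]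
        field_simp
        linear_combination Sx * K * hkey
      have hnv : n (y - yc) = 0 := by
        rw [hvv, map_sub, map_add, map_smul, map_smul, map_smul, smul_eq_mul, smul_eq_mul,
          smul_eq_mul, hnaa', hnba, mul_zero, sub_zero]
        have hnxa : n (x - a) = t - p 0 := by rw [hnd, hla, ← htdef]
        rw [hnxa, hμdef]
        field_simp
        linear_combination (t - p 0) * hkey - δ * hkey2
      have hyyc : y = yc := sub_eq_zero.mp (inj _ hDv hnv)
      -- yc ∈ P'
      have hlamr : lam / ρ = δ * Sx / Δ := by
        rw [hlamdef]
        field_simp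
      have hlam0 : 0 ≤ lam / ρ := by
        rw [hlamr]
        exact div_nonneg (mul_nonneg (le_of_lt hδ) hS0) (le_of_lt hΔpos)
      have hlam1 : lam / ρ ≤ 1 := by
        rw [hlamr, div_le_one hΔpos]
        exact hΔSx
      have hycP : yc ∈ polyRegion l p' := by
        rw [hycdef]
        exact hconv' ha'P hb'P (by linarith) hlam0 (by ring)
      -- ρ • x + u lies on the segment from x to y
      have hcomb : (1 - μ⁻¹) • x + μ⁻¹ • y = ρ • x + u := by
        rw [hydef]
        funext j
        simp only [Pi.add_apply, Pi.smul_apply, Pi.sub_apply, smul_eq_mul]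
        field_simp
        ring
      have hμinv0 : 0 ≤ μ⁻¹ := inv_nonneg.mpr (le_of_lt hμpos)
      have hμinv1 : μ⁻¹ ≤ 1 := inv_le_one_of_one_le₀ hμ1
      have hmem : (1 - μ⁻¹) • x + μ⁻¹ • y ∈ polyRegion l p' :=
        hconv' (hPsub hxP) (hyyc ▸ hycP) (by linarith) hμinv0 (by ring)
      rwa [hcomb] at hmem
end
end

section
/- Let K be a field and i ∈ {1,2,3}. Let p and q be nonzero Laurent polynomials in three variables over K (finitely supported functions ℤ³ → K with convolution product). Assume supp(p) ⊆ ℕ³, that p has a term whose exponent vector has i-th coordinate equal to 0, and that every exponent vector in supp(p·q) has nonnegative i-th coordinate. Then every exponent vector in supp(q) has nonnegative i-th coordinate. -/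
/-- Let `K` be a field and `i ∈ {1,2,3}`.  Let `p, q` be nonzero Laurent
polynomials in three variables over `K` (elements of the monoid algebra `K[ℤ³]`).
Assume `supp(p) ⊆ ℕ³`, that `p` has a term whose exponent vector has `i`-th coordinate
equal to `0`, and that every exponent vector in `supp(p·q)` has nonnegative `i`-th
coordinate.  Then every exponent vector in `supp(q)` has nonnegative `i`-th coordinate. -/
theorem laurent_quotient_nonneg_coordinate
    (K : Type) [Field K] (i : Fin 3)
    (p q : AddMonoidAlgebra K (Fin 3 → ℤ))
    (hp : p ≠ 0) (hq : q ≠ 0)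
    (hpN : ∀ u ∈ p.coeff.support, ∀ j, 0 ≤ u j)
    (hpi : ∃ u ∈ p.coeff.support, u i = 0)
    (hpq : ∀ u ∈ (p * q).coeff.support, 0 ≤ u i) :
    ∀ u ∈ q.coeff.support, 0 ≤ u i := by
  classical
  intro u hu
  by_contra hneg
  push_neg at hneg
  -- minimal i-coordinate over supp q
  have hS : (q.coeff.support.image (fun v => v i)).Nonempty :=
    ⟨u i, Finset.mem_image_of_mem _ hu⟩
  set m : ℤ := (q.coeff.support.image (fun v => v i)).min' hS with hm
  have hmle : ∀ v ∈ q.coeff.support, m ≤ v i := fun v hv =>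
    Finset.min'_le _ _ (Finset.mem_image_of_mem _ hv)
  have hmneg : m < 0 := lt_of_le_of_lt (hmle u hu) hneg
  clear_value m
  obtain ⟨b₀, hb₀mem, hb₀⟩ : ∃ b ∈ q.coeff.support, b i = m := by
    obtain ⟨x, hx, hx'⟩ := Finset.mem_image.mp (Finset.min'_mem _ hS)
    exact ⟨x, hx, hm ▸ hx'⟩
  clear hm hS
  -- split p and q
  set P0 : AddMonoidAlgebra K (Fin 3 → ℤ) := AddMonoidAlgebra.ofCoeff (Finsupp.filter (fun a => a i = 0) p.coeff) with hP0
  set P1 : AddMonoidAlgebra K (Fin 3 → ℤ) := AddMonoidAlgebra.ofCoeff (Finsupp.filter (fun a => ¬ a i = 0) p.coeff) with hP1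
  set Q0 : AddMonoidAlgebra K (Fin 3 → ℤ) := AddMonoidAlgebra.ofCoeff (Finsupp.filter (fun b => b i = m) q.coeff) with hQ0
  set Q1 : AddMonoidAlgebra K (Fin 3 → ℤ) := AddMonoidAlgebra.ofCoeff (Finsupp.filter (fun b => ¬ b i = m) q.coeff) with hQ1
  have hPsum : P0 + P1 = p := AddMonoidAlgebra.coeff_injective (Finsupp.filter_pos_add_filter_neg p.coeff _)
  have hQsum : Q0 + Q1 = q := AddMonoidAlgebra.coeff_injective (Finsupp.filter_pos_add_filter_neg q.coeff _)
  have hP0ne : P0 ≠ 0 := by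
    obtain ⟨a, ha, hai⟩ := hpi
    intro h
    have : P0.coeff a = p.coeff a := Finsupp.filter_apply_pos _ _ hai
    rw [h] at this
    exact Finsupp.mem_support_iff.mp ha this.symm
  have hQ0ne : Q0 ≠ 0 := by
    intro h
    have : Q0.coeff b₀ = q.coeff b₀ := Finsupp.filter_apply_pos _ _ hb₀
    rw [h] at this
    exact Finsupp.mem_support_iff.mp hb₀mem this.symm
  have hprod : P0 * Q0 ≠ 0 := mul_ne_zero hP0ne hQ0ne
  obtain ⟨v, hv⟩ := Finsupp.support_nonempty_iff.mpr (mt AddMonoidAlgebra.coeff_eq_zero.mp hprod)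
  -- v has i-coordinate m
  have hvm : v i = m := by
    obtain ⟨a, ha, b, hb, hab⟩ := Finset.mem_add.mp (AddMonoidAlgebra.support_coeff_mul_subset P0 Q0 hv)
    rw [hP0, AddMonoidAlgebra.coeff_ofCoeff, Finsupp.support_filter, Finset.mem_filter] at ha
    rw [hQ0, AddMonoidAlgebra.coeff_ofCoeff, Finsupp.support_filter, Finset.mem_filter] at hb
    have : v i = a i + b i := by rw [← hab]; rfl
    rw [this, ha.2, hb.2, zero_add]
  -- v is not in supports of the other three products
  have key : ∀ (A B : AddMonoidAlgebra K (Fin 3 → ℤ)),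
      (∀ a ∈ A.coeff.support, ∀ b ∈ B.coeff.support, m < a i + b i) → (A * B).coeff v = 0 := by
    intro A B h
    by_contra hAB
    obtain ⟨a, ha, b, hb, hab⟩ := Finset.mem_add.mp
      (AddMonoidAlgebra.support_coeff_mul_subset A B (Finsupp.mem_support_iff.mpr hAB))
    have : v i = a i + b i := by rw [← hab]; rfl
    have := h a ha b hb
    omega
  have h1 : (P0 * Q1).coeff v = 0 := by
    apply key
    intro a ha b hb
    rw [hP0, AddMonoidAlgebra.coeff_ofCoeff, Finsupp.support_filter, Finset.mem_filter] at ha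
    rw [hQ1, AddMonoidAlgebra.coeff_ofCoeff, Finsupp.support_filter, Finset.mem_filter] at hb
    have := hmle b hb.1
    have := hb.2
    have := ha.2
    omega
  have h2 : (P1 * Q0).coeff v = 0 := by
    apply key
    intro a ha b hb
    rw [hP1, AddMonoidAlgebra.coeff_ofCoeff, Finsupp.support_filter, Finset.mem_filter] at ha
    rw [hQ0, AddMonoidAlgebra.coeff_ofCoeff, Finsupp.support_filter, Finset.mem_filter] at hb
    have := hpN a ha.1 i
    have := ha.2
    have := hb.2
    omega
  have h3 : (P1 * Q1).coeff v = 0 := by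
    apply key
    intro a ha b hb
    rw [hP1, AddMonoidAlgebra.coeff_ofCoeff, Finsupp.support_filter, Finset.mem_filter] at ha
    rw [hQ1, AddMonoidAlgebra.coeff_ofCoeff, Finsupp.support_filter, Finset.mem_filter] at hb
    have := hpN a ha.1 i
    have := hmle b hb.1
    have := ha.2
    have := hb.2
    omega
  have hexp : p * q = P0 * Q0 + P0 * Q1 + P1 * Q0 + P1 * Q1 := by
    rw [← hPsum, ← hQsum]; ring
  have hval : (p * q).coeff v = (P0 * Q0).coeff v := by
    rw [hexp, AddMonoidAlgebra.coeff_add, AddMonoidAlgebra.coeff_add, AddMonoidAlgebra.coeff_add, Finsupp.add_apply, Finsupp.add_apply, Finsupp.add_apply, h1, h2, h3,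
      add_zero, add_zero, add_zero]
  have hvmem : v ∈ (p * q).coeff.support := by
    rw [Finsupp.mem_support_iff, hval]
    exact Finsupp.mem_support_iff.mp hv
  have := hpq v hvmem
  rw [hvm] at this
  omega
end

section
/- Let f ∈ ℂ[[x,y,z]] be nonzero, and let n ∈ 𝒩 index a compact facet F_n of Γ₊(f) such that for each i ∈ {1,2,3} there is a point u ∈ supp(f) with ℓ_n(u) = ŵt_n(f) and u_i = 0 (i.e. F_n intersects all three coordinate hyperplanes). Let g ∈ ℂ[[x,y,z]] be nonzero and suppose that the principal part g_n is divisible by f_n in the ring of Laurent polynomials, with quotient h = g_n/f_n. Then h is an honest polynomial, i.e. supp(h) ⊆ ℕ³, and either g = h·f or ŵt_n(g − h·f) > ŵt_n(g). -/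
open Pointwise

noncomputable section

open scoped Classical

/-- The value of the integral functional `l` on an exponent vector `u ∈ ℕ³`. -/
def ldot (l : Fin 3 → ℤ) (u : Fin 3 →₀ ℕ) : ℤ := ∑ i, l i * (u i : ℤ)

/-- The weight `ŵt_l(h) = min {l·u : u ∈ supp h}` of a (nonzero) power series. -/
def wtPS (l : Fin 3 → ℤ) (h : MvPowerSeries (Fin 3) ℂ) : ℤ :=
  sInf (ldot l '' psSupp h)

/-- The coefficients of the principal part `h_l` of a power series `h` with respect to
the weight `l`: the terms of `h` of minimal `l`-weight, viewed as a Laurent polynomial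
coefficient function on `ℤ³`. -/
def ppCoeff (l : Fin 3 → ℤ) (h : MvPowerSeries (Fin 3) ℂ) : (Fin 3 → ℤ) → ℂ :=
  fun v =>
    if (∀ i, 0 ≤ v i) ∧ (∑ i, l i * v i) = wtPS l h then
      MvPowerSeries.coeff (Finsupp.equivFunOnFinite.symm fun i => (v i).toNat) h
    else 0

/-- Convolution of a coefficient function `p : ℤ³ → ℂ` with a Laurent polynomial `h`;
this is the coefficient function of the Laurent product `p·h`. -/
def convMul (p : (Fin 3 → ℤ) → ℂ) (h : AddMonoidAlgebra ℂ (Fin 3 → ℤ)) :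
    (Fin 3 → ℤ) → ℂ :=
  fun v => ∑ u ∈ h.coeff.support, h.coeff u * p (v - u)

/-- A Laurent polynomial whose support lies in `ℕ³`, viewed as a power series. -/
def laurentToPS (h : AddMonoidAlgebra ℂ (Fin 3 → ℤ)) : MvPowerSeries (Fin 3) ℂ :=
  fun d => h.coeff fun i => (d i : ℤ)


/-! ### Auxiliary material for the proof -/

/-- Cast an exponent vector to `ℤ³`. -/
def uzz (u : Fin 3 →₀ ℕ) : Fin 3 → ℤ := fun i => u i

/-- Truncate an integer vector to an exponent vector. -/
def zn (v : Fin 3 → ℤ) : Fin 3 →₀ ℕ := Finsupp.equivFunOnFinite.symm fun i => (v i).toNat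

lemma zn_uzz (u : Fin 3 →₀ ℕ) : zn (uzz u) = u := by
  ext i; simp [zn, uzz]

lemma uzz_zn (v : Fin 3 → ℤ) (h : ∀ i, 0 ≤ v i) : uzz (zn v) = v := by
  funext i; simp [zn, uzz, Int.toNat_of_nonneg (h i)]

lemma ldot_add (l : Fin 3 → ℤ) (p q : Fin 3 →₀ ℕ) :
    ldot l (p + q) = ldot l p + ldot l q := by
  simp only [ldot, Finsupp.add_apply, Nat.cast_add, mul_add, Finset.sum_add_distrib]

lemma ldot_nonneg (l : Fin 3 → ℤ) (hpos : ∀ i, 0 < l i) (u : Fin 3 →₀ ℕ) : 0 ≤ ldot l u :=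
  Finset.sum_nonneg fun i _ => mul_nonneg (hpos i).le (Int.natCast_nonneg _)

lemma wt_facts (l : Fin 3 → ℤ) (hpos : ∀ i, 0 < l i) (f : MvPowerSeries (Fin 3) ℂ)
    (hf : f ≠ 0) :
    (∃ u ∈ psSupp f, ldot l u = wtPS l f) ∧ ∀ u ∈ psSupp f, wtPS l f ≤ ldot l u := by
  have hne : (psSupp f).Nonempty := by
    by_contra hcon
    rw [Set.not_nonempty_iff_eq_empty] at hcon
    apply hf
    ext u
    have : u ∉ psSupp f := by rw [hcon]; exact Set.notMem_empty u
    rw [psSupp, Set.mem_setOf_eq, not_not] at this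
    simpa using this
  have hSne : (ldot l '' psSupp f).Nonempty := hne.image _
  have hbdd : BddBelow (ldot l '' psSupp f) := by
    refine ⟨0, ?_⟩
    rintro x ⟨u, hu, rfl⟩
    exact ldot_nonneg l hpos u
  constructor
  · obtain ⟨u, hu, he⟩ := Int.csInf_mem hSne hbdd
    exact ⟨u, hu, he⟩
  · intro u hu
    exact csInf_le hbdd ⟨u, hu, rfl⟩

lemma pp_fin (l : Fin 3 → ℤ) (hpos : ∀ i, 0 < l i) (f : MvPowerSeries (Fin 3) ℂ) :
    (Function.support (ppCoeff l f)).Finite := by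
  apply Set.Finite.subset (Set.Finite.pi (fun i : Fin 3 => Set.finite_Icc (0 : ℤ) (wtPS l f)))
  intro v hv
  rw [Function.mem_support] at hv
  unfold ppCoeff at hv
  split_ifs at hv with hc
  · obtain ⟨h0, hsum⟩ := hc
    rw [Set.mem_univ_pi]
    intro i
    simp only [Set.mem_Icc]
    refine ⟨h0 i, ?_⟩
    have h1 : l i * v i ≤ ∑ j, l j * v j :=
      Finset.single_le_sum (fun j _ => mul_nonneg (hpos j).le (h0 j)) (Finset.mem_univ i)
    have h2 : v i ≤ l i * v i := le_mul_of_one_le_left (h0 i) (hpos i)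
    exact h2.trans (h1.trans_eq hsum)
  · exact absurd rfl hv

lemma exists_min_mul (φ : (Fin 3 → ℤ) →+ ℤ) (a b : AddMonoidAlgebra ℂ (Fin 3 → ℤ)) (ma mb : ℤ)
    (hma : ∀ u ∈ a.coeff.support, ma ≤ φ u) (hma' : ∃ u ∈ a.coeff.support, φ u = ma)
    (hmb : ∀ u ∈ b.coeff.support, mb ≤ φ u) (hmb' : ∃ u ∈ b.coeff.support, φ u = mb) :
    ∃ v ∈ (a * b).coeff.support, φ v = ma + mb := by
  classical
  set P : (Fin 3 → ℤ) → Prop := fun u => φ u = ma with hP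
  set Q : (Fin 3 → ℤ) → Prop := fun u => φ u = mb with hQ
  set a' : AddMonoidAlgebra ℂ (Fin 3 → ℤ) := AddMonoidAlgebra.ofCoeff (a.coeff.filter P) with ha'
  set a'' : AddMonoidAlgebra ℂ (Fin 3 → ℤ) := AddMonoidAlgebra.ofCoeff (a.coeff.filter (fun u => ¬ P u)) with ha''
  set b' : AddMonoidAlgebra ℂ (Fin 3 → ℤ) := AddMonoidAlgebra.ofCoeff (b.coeff.filter Q) with hb'
  set b'' : AddMonoidAlgebra ℂ (Fin 3 → ℤ) := AddMonoidAlgebra.ofCoeff (b.coeff.filter (fun u => ¬ Q u)) with hb''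
  have haa : a' + a'' = a := AddMonoidAlgebra.coeff_injective (Finsupp.filter_pos_add_filter_neg a.coeff P)
  have hbb : b' + b'' = b := AddMonoidAlgebra.coeff_injective (Finsupp.filter_pos_add_filter_neg b.coeff Q)
  have ha'ne : a' ≠ 0 := by
    obtain ⟨u, hu, hphi⟩ := hma'
    intro h0
    have : a'.coeff u = a.coeff u := Finsupp.filter_apply_pos P a.coeff hphi
    rw [h0] at this
    exact Finsupp.mem_support_iff.mp hu this.symm
  have hb'ne : b' ≠ 0 := by
    obtain ⟨u, hu, hphi⟩ := hmb'
    intro h0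
    have : b'.coeff u = b.coeff u := Finsupp.filter_apply_pos Q b.coeff hphi
    rw [h0] at this
    exact Finsupp.mem_support_iff.mp hu this.symm
  have hprod : a' * b' ≠ 0 := mul_ne_zero ha'ne hb'ne
  obtain ⟨v, hv⟩ := Finsupp.support_nonempty_iff.mpr (mt AddMonoidAlgebra.coeff_eq_zero.mp hprod)
  have hvmem := AddMonoidAlgebra.support_coeff_mul_subset a' b' hv
  obtain ⟨u, hu, w, hw, rfl⟩ := Finset.mem_add.mp hvmem
  have memfilt : ∀ (c : AddMonoidAlgebra ℂ (Fin 3 → ℤ)) (R : (Fin 3 → ℤ) → Prop)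
      [DecidablePred R] (x : Fin 3 → ℤ),
      x ∈ (Finsupp.filter R c.coeff).support → x ∈ c.coeff.support ∧ R x := by
    intro c R _ x hx
    rw [Finsupp.support_filter, Finset.mem_filter] at hx
    exact hx
  have hu' : φ u = ma := (memfilt a P u hu).2
  have hw' : φ w = mb := (memfilt b Q w hw).2
  have hφv : φ (u + w) = ma + mb := by rw [map_add, hu', hw']
  refine ⟨u + w, ?_, hφv⟩
  rw [Finsupp.mem_support_iff]
  have key : (a * b).coeff (u + w) = (a' * b').coeff (u + w) := by
    have h1 : (a'' * b).coeff (u + w) = 0 := by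
      by_contra hne
      have := AddMonoidAlgebra.support_coeff_mul_subset a'' b (Finsupp.mem_support_iff.mpr hne)
      obtain ⟨p, hp, q, hq, hpq⟩ := Finset.mem_add.mp this
      have hpm := memfilt a (fun u => ¬ P u) p hp
      have hpma : ma < φ p := lt_of_le_of_ne (hma p hpm.1) (Ne.symm hpm.2)
      have hqmb : mb ≤ φ q := hmb q hq
      have : ma + mb < φ (p + q) := by rw [map_add]; omega
      rw [hpq, hφv] at this; omega
    have h2 : (a' * b'').coeff (u + w) = 0 := by
      by_contra hne
      have := AddMonoidAlgebra.support_coeff_mul_subset a' b'' (Finsupp.mem_support_iff.mpr hne)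
      obtain ⟨p, hp, q, hq, hpq⟩ := Finset.mem_add.mp this
      have hpma : φ p = ma := (memfilt a P p hp).2
      have hqm := memfilt b (fun u => ¬ Q u) q hq
      have hqmb : mb < φ q := lt_of_le_of_ne (hmb q hqm.1) (Ne.symm hqm.2)
      have : ma + mb < φ (p + q) := by rw [map_add]; omega
      rw [hpq, hφv] at this; omega
    calc (a * b).coeff (u + w) = ((a' + a'') * b).coeff (u + w) := by rw [haa]
      _ = (a' * b).coeff (u + w) + (a'' * b).coeff (u + w) := by rw [add_mul]; rfl
      _ = (a' * b).coeff (u + w) := by rw [h1, add_zero]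
      _ = (a' * (b' + b'')).coeff (u + w) := by rw [hbb]
      _ = (a' * b').coeff (u + w) + (a' * b'').coeff (u + w) := by rw [mul_add]; rfl
      _ = (a' * b').coeff (u + w) := by rw [h2, add_zero]
  rw [key]
  exact Finsupp.mem_support_iff.mp hv

lemma mul_apply_eq (h F : AddMonoidAlgebra ℂ (Fin 3 → ℤ)) (v : Fin 3 → ℤ) :
    (h * F).coeff v = ∑ u ∈ h.coeff.support, h.coeff u * F.coeff (v - u) := by
  classical
  rw [AddMonoidAlgebra.coeff_mul, Finsupp.sum]
  refine Finset.sum_congr rfl fun u hu => ?_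
  rw [Finsupp.sum]
  have step : ∀ w ∈ F.coeff.support, (if u + w = v then h.coeff u * F.coeff w else 0)
      = if w = v - u then h.coeff u * F.coeff w else 0 := by
    intro w _
    congr 1
    simp only [eq_iff_iff]
    constructor
    · intro hh; rw [← hh]; abel
    · intro hh; rw [hh]; abel
  rw [Finset.sum_congr rfl step, Finset.sum_ite_eq' F.coeff.support (v - u) (fun w => h.coeff u * F.coeff w)]
  by_cases hm : v - u ∈ F.coeff.support
  · rw [if_pos hm]
  · rw [if_neg hm, Finsupp.notMem_support_iff.mp hm, mul_zero]

/-- Let `f ∈ ℂ[[x,y,z]]` be nonzero and let `n ∈ 𝒩` index a compact facet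
`F_n` of `Γ₊(f)` (with primitive inward normal `l`) intersecting all three coordinate
hyperplanes, i.e. for each `i` there is `u ∈ supp f` with `ℓ_n(u) = ŵt_n(f)` and `u_i = 0`.
Let `g ∈ ℂ[[x,y,z]]` be nonzero and suppose the principal part `g_n` is divisible by `f_n`
in the Laurent polynomial ring, with quotient `h = g_n/f_n`.  Then `h` is an honest
polynomial (`supp h ⊆ ℕ³`) and either `g = h·f` or `ŵt_n(g − h·f) > ŵt_n(g)`. -/
theorem principal_part_division
    (f : MvPowerSeries (Fin 3) ℂ) (hf : f ≠ 0)
    (l : Fin 3 → ℤ)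
    (hprim : Primitive l) (hpos : ∀ i, 0 < l i)
    (hfacet : IsCompactFacet (newtonPolyhedron f) (minSet l (newtonPolyhedron f)))
    (haxes : ∀ i : Fin 3, ∃ u ∈ psSupp f, ldot l u = wtPS l f ∧ u i = 0)
    (g : MvPowerSeries (Fin 3) ℂ) (hg : g ≠ 0)
    (h : AddMonoidAlgebra ℂ (Fin 3 → ℤ))
    (hdiv : ppCoeff l g = convMul (ppCoeff l f) h) :
    (∀ u ∈ h.coeff.support, ∀ i, 0 ≤ u i) ∧
      (g = laurentToPS h * f ∨ wtPS l g < wtPS l (g - laurentToPS h * f)) := by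
  classical
  obtain ⟨⟨u0f, hu0f, hu0fW⟩, hwf_le⟩ := wt_facts l hpos f hf
  obtain ⟨⟨u0g, hu0g, hu0gW⟩, hwg_le⟩ := wt_facts l hpos g hg
  set Wf := wtPS l f with hWfdef
  set Wg := wtPS l g with hWgdef
  set F : AddMonoidAlgebra ℂ (Fin 3 → ℤ) :=
    AddMonoidAlgebra.ofCoeff (Finsupp.ofSupportFinite (ppCoeff l f) (pp_fin l hpos f)) with hFdef
  set G : AddMonoidAlgebra ℂ (Fin 3 → ℤ) :=
    AddMonoidAlgebra.ofCoeff (Finsupp.ofSupportFinite (ppCoeff l g) (pp_fin l hpos g)) with hGdef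
  have hFapp : ∀ v, F.coeff v = ppCoeff l f v := fun v => rfl
  have hGapp : ∀ v, G.coeff v = ppCoeff l g v := fun v => rfl
  -- facts about nonzero values of ppCoeff
  have hppSupp : ∀ (k : MvPowerSeries (Fin 3) ℂ) (v : Fin 3 → ℤ), ppCoeff l k v ≠ 0 →
      (∀ i, 0 ≤ v i) ∧ (∑ i, l i * v i) = wtPS l k ∧
        MvPowerSeries.coeff (zn v) k = ppCoeff l k v := by
    intro k v hv
    unfold ppCoeff at hv ⊢
    split_ifs at hv ⊢ with hc
    · exact ⟨hc.1, hc.2, rfl⟩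
    · exact absurd rfl hv
  have hppval : ∀ (k : MvPowerSeries (Fin 3) ℂ) (u : Fin 3 →₀ ℕ), u ∈ psSupp k →
      ldot l u = wtPS l k →
      ppCoeff l k (uzz u) = MvPowerSeries.coeff u k ∧ ppCoeff l k (uzz u) ≠ 0 := by
    intro k u hu hW
    have hcond : (∀ i, 0 ≤ uzz u i) ∧ (∑ i, l i * uzz u i) = wtPS l k :=
      ⟨fun i => Int.natCast_nonneg _, by rw [← hW]; rfl⟩
    have harg : (Finsupp.equivFunOnFinite.symm fun i => ((uzz u) i).toNat) = u := zn_uzz u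
    unfold ppCoeff
    rw [if_pos hcond, harg]
    exact ⟨rfl, hu⟩
  have hGF : G = h * F := by
    apply AddMonoidAlgebra.coeff_injective
    apply Finsupp.ext; intro v
    rw [hGapp v, hdiv]
    rw [mul_apply_eq h F v]
    rfl
  have hFne : F ≠ 0 := by
    obtain ⟨-, hne⟩ := hppval f u0f hu0f hu0fW
    intro h0
    apply hne
    rw [← hFapp, h0]; rfl
  have hGne : G ≠ 0 := by
    obtain ⟨-, hne⟩ := hppval g u0g hu0g hu0gW
    intro h0
    apply hne
    rw [← hGapp, h0]; rfl
  have hhne : h ≠ 0 := by rintro rfl; rw [zero_mul] at hGF; exact hGne hGF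
  have hhsupp_ne : h.coeff.support.Nonempty := Finsupp.support_nonempty_iff.mpr (mt AddMonoidAlgebra.coeff_eq_zero.mp hhne)
  have hFsupp_ne : F.coeff.support.Nonempty := Finsupp.support_nonempty_iff.mpr (mt AddMonoidAlgebra.coeff_eq_zero.mp hFne)
  -- Part 1 : nonnegativity of the support of h
  have part1 : ∀ u ∈ h.coeff.support, ∀ i, 0 ≤ u i := by
    intro u hu i
    set φ : (Fin 3 → ℤ) →+ ℤ := Pi.evalAddMonoidHom (fun _ : Fin 3 => ℤ) i with hφdef
    have hφapp : ∀ w : Fin 3 → ℤ, φ w = w i := fun w => rfl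
    set S := h.coeff.support.image φ with hSdef
    have hSne : S.Nonempty := hhsupp_ne.image _
    set ma := S.min' hSne with hmadef
    have hma : ∀ w ∈ h.coeff.support, ma ≤ φ w := fun w hw =>
      Finset.min'_le _ _ (Finset.mem_image_of_mem _ hw)
    have hma' : ∃ w ∈ h.coeff.support, φ w = ma := by
      obtain ⟨w, hw, he⟩ := Finset.mem_image.mp (S.min'_mem hSne)
      exact ⟨w, hw, he⟩
    have hmb : ∀ w ∈ F.coeff.support, (0 : ℤ) ≤ φ w := by
      intro w hw
      rw [hφapp]
      exact (hppSupp f w (by rw [← hFapp]; exact Finsupp.mem_support_iff.mp hw)).1 i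
    have hmb' : ∃ w ∈ F.coeff.support, φ w = 0 := by
      obtain ⟨v0, hv0, hW0, hi0⟩ := haxes i
      refine ⟨uzz v0, ?_, ?_⟩
      · rw [Finsupp.mem_support_iff, hFapp]
        exact (hppval f v0 hv0 (by rw [hW0])).2
      · rw [hφapp]
        show ((v0 i : ℕ) : ℤ) = 0
        rw [hi0]; rfl
    obtain ⟨v, hv, hvφ⟩ := exists_min_mul φ h F ma 0 hma hma' hmb hmb'
    rw [← hGF] at hv
    have h0v : 0 ≤ φ v := by
      rw [hφapp]
      exact (hppSupp g v (by rw [← hGapp]; exact Finsupp.mem_support_iff.mp hv)).1 i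
    have hma0 : 0 ≤ ma := by omega
    have := hma u hu
    rw [hφapp] at this
    omega
  -- the level functional
  set φL : (Fin 3 → ℤ) →+ ℤ := AddMonoidHom.mk' (fun v => ∑ i, l i * v i)
    (by intro a b; simp [Pi.add_apply, mul_add, Finset.sum_add_distrib]) with hφLdef
  have hφLapp : ∀ v : Fin 3 → ℤ, φL v = ∑ i, l i * v i := fun v => rfl
  have hφL_uzz : ∀ u : Fin 3 →₀ ℕ, φL (uzz u) = ldot l u := fun u => rfl
  have hFlevel : ∀ w ∈ F.coeff.support, φL w = Wf := by
    intro w hw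
    rw [hφLapp]
    exact (hppSupp f w (by rw [← hFapp]; exact Finsupp.mem_support_iff.mp hw)).2.1
  have hGlevel : ∀ v ∈ G.coeff.support, φL v = Wg := by
    intro v hv
    rw [hφLapp]
    exact (hppSupp g v (by rw [← hGapp]; exact Finsupp.mem_support_iff.mp hv)).2.1
  -- purity : all of h's support is on the level Wg - Wf
  have habs : ∀ (ψ : (Fin 3 → ℤ) →+ ℤ) (wF wG : ℤ), (∀ w ∈ F.coeff.support, ψ w = wF) →
      (∀ v ∈ G.coeff.support, ψ v = wG) → ∀ u ∈ h.coeff.support, wG - wF ≤ ψ u := by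
    intro ψ wF wG hFs hGs u hu
    set S := h.coeff.support.image ψ with hSdef
    have hSne : S.Nonempty := hhsupp_ne.image _
    set ma := S.min' hSne with hmadef
    have hma : ∀ w ∈ h.coeff.support, ma ≤ ψ w := fun w hw =>
      Finset.min'_le _ _ (Finset.mem_image_of_mem _ hw)
    have hma' : ∃ w ∈ h.coeff.support, ψ w = ma := by
      obtain ⟨w, hw, he⟩ := Finset.mem_image.mp (S.min'_mem hSne)
      exact ⟨w, hw, he⟩
    have hmb : ∀ w ∈ F.coeff.support, wF ≤ ψ w := fun w hw => (hFs w hw).ge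
    have hmb' : ∃ w ∈ F.coeff.support, ψ w = wF := by
      obtain ⟨w, hw⟩ := hFsupp_ne
      exact ⟨w, hw, hFs w hw⟩
    obtain ⟨v, hv, hvψ⟩ := exists_min_mul ψ h F ma wF hma hma' hmb hmb'
    rw [← hGF] at hv
    have := hGs v hv
    have h2 := hma u hu
    omega
  have hpure : ∀ u ∈ h.coeff.support, φL u = Wg - Wf := by
    intro u hu
    have h1 : Wg - Wf ≤ φL u := habs φL Wf Wg hFlevel hGlevel u hu
    have h2 : (-Wg) - (-Wf) ≤ (-φL) u := by
      refine habs (-φL) (-Wf) (-Wg) ?_ ?_ u hu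
      · intro w hw; rw [AddMonoidHom.neg_apply, hFlevel w hw]
      · intro v hv; rw [AddMonoidHom.neg_apply, hGlevel v hv]
    rw [AddMonoidHom.neg_apply] at h2
    omega
  -- coefficients of the product power series
  have hcoeffH : ∀ d : Fin 3 →₀ ℕ, MvPowerSeries.coeff d (laurentToPS h) = h.coeff (uzz d) :=
    fun d => rfl
  -- the key vanishing statement
  have key : ∀ d : Fin 3 →₀ ℕ, ldot l d ≤ Wg →
      MvPowerSeries.coeff d (g - laurentToPS h * f) = 0 := by
    intro d hd
    rw [map_sub, sub_eq_zero, MvPowerSeries.coeff_mul]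
    have hterm : ∀ p ∈ Finset.HasAntidiagonal.antidiagonal d,
        MvPowerSeries.coeff p.1 (laurentToPS h) * MvPowerSeries.coeff p.2 f
          = h.coeff (uzz p.1) * MvPowerSeries.coeff p.2 f := fun p _ => rfl
    rw [Finset.sum_congr rfl hterm]
    rcases lt_or_eq_of_le hd with hlt | heq
    · -- strictly below the weight : everything vanishes
      have hg0 : MvPowerSeries.coeff d g = 0 := by
        by_contra hne
        have := hwg_le d hne
        omega
      rw [hg0]
      symm
      apply Finset.sum_eq_zero
      intro p hp
      by_contra hne
      have h1 : h.coeff (uzz p.1) ≠ 0 := fun h0 => hne (by rw [h0, zero_mul])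
      have h2 : MvPowerSeries.coeff p.2 f ≠ 0 := fun h0 => hne (by rw [h0, mul_zero])
      have hl1 : φL (uzz p.1) = Wg - Wf := hpure _ (Finsupp.mem_support_iff.mpr h1)
      rw [hφL_uzz] at hl1
      have hl2 : Wf ≤ ldot l p.2 := hwf_le p.2 h2
      have hdd : ldot l d = ldot l p.1 + ldot l p.2 := by
        rw [← Finset.HasAntidiagonal.mem_antidiagonal.mp hp]
        exact ldot_add l p.1 p.2
      omega
    · -- exactly at the weight
      have hgd : MvPowerSeries.coeff d g = ppCoeff l g (uzz d) := by
        have hcond : (∀ i, 0 ≤ uzz d i) ∧ (∑ i, l i * uzz d i) = wtPS l g :=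
          ⟨fun i => Int.natCast_nonneg _, by rw [show (∑ i, l i * uzz d i) = ldot l d from rfl, heq]⟩
        have harg : (Finsupp.equivFunOnFinite.symm fun i => ((uzz d) i).toNat) = d := zn_uzz d
        unfold ppCoeff
        rw [if_pos hcond, harg]
      rw [hgd, hdiv]
      show (∑ u ∈ h.coeff.support, h.coeff u * ppCoeff l f (uzz d - u)) = _
      refine Finset.sum_bij_ne_zero (fun u hu hne => (zn u, d - zn u)) ?_ ?_ ?_ ?_
      · -- membership in the antidiagonal
        intro u hu hne
        rw [Finset.HasAntidiagonal.mem_antidiagonal]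
        apply add_tsub_cancel_of_le
        have hppne : ppCoeff l f (uzz d - u) ≠ 0 := fun h0 => hne (by rw [h0, mul_zero])
        have hge := (hppSupp f _ hppne).1
        refine Finsupp.le_def.mpr fun i => ?_
        show (zn u) i ≤ d i
        have h1 : 0 ≤ (d i : ℤ) - u i := hge i
        have h2 : 0 ≤ u i := part1 u hu i
        have h3 : (zn u) i = (u i).toNat := rfl
        omega
      · -- injectivity
        intro u₁ hu₁ hne₁ u₂ hu₂ hne₂ heq2
        have h1 : zn u₁ = zn u₂ := congrArg Prod.fst heq2
        have := congrArg uzz h1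
        rwa [uzz_zn u₁ (part1 u₁ hu₁), uzz_zn u₂ (part1 u₂ hu₂)] at this
      · -- surjectivity
        intro p hp hne
        have h1 : h.coeff (uzz p.1) ≠ 0 := fun h0 => hne (by rw [h0, zero_mul])
        have h2 : MvPowerSeries.coeff p.2 f ≠ 0 := fun h0 => hne (by rw [h0, mul_zero])
        have hmem : uzz p.1 ∈ h.coeff.support := Finsupp.mem_support_iff.mpr h1
        have hl1 : φL (uzz p.1) = Wg - Wf := hpure _ hmem
        rw [hφL_uzz] at hl1
        have hsum : p.1 + p.2 = d := Finset.HasAntidiagonal.mem_antidiagonal.mp hp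
        have hdd : ldot l d = ldot l p.1 + ldot l p.2 := by
          rw [← hsum]; exact ldot_add l p.1 p.2
        have hl2 : ldot l p.2 = Wf := by omega
        have hdiff : uzz d - uzz p.1 = uzz p.2 := by
          funext i
          have : p.1 i + p.2 i = d i := by rw [← hsum]; rfl
          show (d i : ℤ) - (p.1 i : ℤ) = (p.2 i : ℤ)
          omega
        have hppne : ppCoeff l f (uzz d - uzz p.1) ≠ 0 := by
          rw [hdiff]
          exact (hppval f p.2 h2 hl2).2
        refine ⟨uzz p.1, hmem, ?_, ?_⟩
        · exact fun h0 => hppne (by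
            rcases mul_eq_zero.mp h0 with h' | h'
            · exact absurd h' h1
            · exact h')
        · have hzn1 : zn (uzz p.1) = p.1 := zn_uzz p.1
          have hzn2 : d - zn (uzz p.1) = p.2 := by
            rw [hzn1, ← hsum]
            exact add_tsub_cancel_left p.1 p.2
          show (zn (uzz p.1), d - zn (uzz p.1)) = p
          rw [hzn1]
          have hfin : d - p.1 = p.2 := by rw [← hsum]; exact add_tsub_cancel_left p.1 p.2
          rw [hfin]
      · -- values agree
        intro u hu hne
        have hppne : ppCoeff l f (uzz d - u) ≠ 0 := fun h0 => hne (by rw [h0, mul_zero])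
        have hfacts := hppSupp f _ hppne
        have huzz : uzz (zn u) = u := uzz_zn u (part1 u hu)
        have hargeq : zn (uzz d - u) = d - zn u := by
          ext i
          have h1 : 0 ≤ (d i : ℤ) - u i := hfacts.1 i
          have h2 : 0 ≤ u i := part1 u hu i
          rw [Finsupp.tsub_apply]
          have h3 : (zn u) i = (u i).toNat := rfl
          rw [h3]
          show ((d i : ℤ) - u i).toNat = (d i) - (u i).toNat
          omega
        show h.coeff u * ppCoeff l f (uzz d - u) = h.coeff (uzz (zn u)) * MvPowerSeries.coeff (d - zn u) f
        rw [huzz]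
        congr 1
        rw [← hfacts.2.2, hargeq]
  refine ⟨part1, ?_⟩
  by_cases hzero : g - laurentToPS h * f = 0
  · left
    exact sub_eq_zero.mp hzero
  · right
    obtain ⟨⟨uD, huD, huDW⟩, -⟩ := wt_facts l hpos _ hzero
    have hgt : Wg < ldot l uD := by
      by_contra hle
      push_neg at hle
      exact huD (key uD hle)
    rw [huDW] at hgt
    exact hgt
end
end

section
/- Let N ≥ 1 be an integer and let f = f₀(x,y) + z^N ∈ ℂ[[x,y,z]], where f₀ ∈ ℂ[[x,y]] is nonzero with f₀(0,0) = 0; equivalently, supp(f) ⊆ (ℕ² × {0}) ∪ {(0,0,N)} with (0,0,N) ∈ supp(f) and (0,0,0) ∉ supp(f). Then every compact facet (compact two-dimensional exposed face) of Γ₊(f) contains the point (0,0,N). In particular, any two compact facets of Γ₊(f) intersect, i.e. the Newton diagram of f is bi-stellar. -/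
open Pointwise

noncomputable section

private lemma lin_apply_eq_sum (l : (Fin 3 → ℝ) →L[ℝ] ℝ) (x : Fin 3 → ℝ) :
    l x = ∑ i, x i * l (Pi.single i 1) := by
  have hx : x = ∑ i : Fin 3, x i • (Pi.single i 1 : Fin 3 → ℝ) := by
    funext j
    simp [Finset.sum_apply, Pi.single_apply]
  conv_lhs => rw [hx]
  rw [map_sum]
  exact Finset.sum_congr rfl fun i _ => by rw [map_smul, smul_eq_mul]

/-- Let `N ≥ 1` and `f = f₀(x,y) + z^N` with `f₀` nonzero, `f₀(0,0) = 0`;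
equivalently `supp f ⊆ (ℕ² × {0}) ∪ {(0,0,N)}` with `(0,0,N) ∈ supp f` and
`(0,0,0) ∉ supp f`.  Then every compact facet of `Γ₊(f)` contains the point `(0,0,N)`;
in particular any two compact facets of `Γ₊(f)` intersect (the diagram is bi-stellar). -/
theorem suspension_facets_contain_apex
    (N : ℕ) (hN : 1 ≤ N)
    (f : MvPowerSeries (Fin 3) ℂ) (hf : f ≠ 0)
    (hsupp : ∀ u ∈ psSupp f, u 2 = 0 ∨ u = Finsupp.single (2 : Fin 3) N)
    (hzN : Finsupp.single (2 : Fin 3) N ∈ psSupp f)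
    (h0 : (0 : Fin 3 →₀ ℕ) ∉ psSupp f) :
    (∀ F, IsCompactFacet (newtonPolyhedron f) F → ![(0:ℝ), 0, (N : ℝ)] ∈ F) ∧
    (∀ F F', IsCompactFacet (newtonPolyhedron f) F →
      IsCompactFacet (newtonPolyhedron f) F' → (F ∩ F').Nonempty) := by
  classical
  set C : Set (Fin 3 → ℝ) := {v | ∀ i, 0 ≤ v i} with hCdef
  set S : Set (Fin 3 → ℝ) := expR '' psSupp f with hSdef
  have hCconv : Convex ℝ C := by
    intro x hx y hy a b ha hb hab i
    have h1 := hx i; have h2 := hy i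
    simp only [Pi.add_apply, Pi.smul_apply, smul_eq_mul]
    nlinarith
  have hPeq : newtonPolyhedron f = convexHull ℝ S + C := by
    rw [newtonPolyhedron, convexHull_add, hCconv.convexHull_eq]
  have hC0 : (0 : Fin 3 → ℝ) ∈ C := fun i => le_refl 0
  have hQP : convexHull ℝ S ⊆ newtonPolyhedron f := by
    rw [hPeq]; intro x hx
    simpa using Set.add_mem_add hx hC0
  have hadd : ∀ x ∈ newtonPolyhedron f, ∀ v ∈ C, x + v ∈ newtonPolyhedron f := by
    intro x hx v hv
    rw [hPeq] at hx ⊢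
    obtain ⟨q, hq, c, hc, rfl⟩ := Set.mem_add.1 hx
    exact Set.mem_add.2 ⟨q, hq, c + v, fun i => add_nonneg (hc i) (hv i), (add_assoc _ _ _).symm⟩
  have hpe : expR (Finsupp.single (2 : Fin 3) N) = ![(0:ℝ), 0, (N : ℝ)] := by
    funext i; fin_cases i <;> simp [expR, Finsupp.single_apply]
  have hpS : ![(0:ℝ), 0, (N : ℝ)] ∈ S := ⟨_, hzN, hpe⟩
  have hpP : ![(0:ℝ), 0, (N : ℝ)] ∈ newtonPolyhedron f := hQP (subset_convexHull ℝ S hpS)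
  have key : ∀ F, IsCompactFacet (newtonPolyhedron f) F → ![(0:ℝ), 0, (N : ℝ)] ∈ F := by
    intro F hF
    obtain ⟨hexp, hcomp, hdim⟩ := hF
    have hFne : F.Nonempty := by
      rcases Set.eq_empty_or_nonempty F with h | h
      · rw [h, vectorSpan_empty] at hdim; simp at hdim
      · exact h
    obtain ⟨l, hlF⟩ := hexp hFne
    obtain ⟨x₀, hx₀F⟩ := hFne
    have hx₀mem := hx₀F
    rw [hlF] at hx₀mem
    have hx₀P : x₀ ∈ newtonPolyhedron f := hx₀mem.1
    set m := l x₀ with hmdef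
    have hmax : ∀ y ∈ newtonPolyhedron f, l y ≤ m := hx₀mem.2
    have hFval : ∀ x ∈ F, l x = m := by
      intro x hx; rw [hlF] at hx
      exact le_antisymm (hmax x hx.1) (hx.2 x₀ hx₀P)
    have hlneg : ∀ i, l (Pi.single i 1) < 0 := by
      intro i
      by_contra hcon
      push_neg at hcon
      have hray : ∀ t : ℝ, 0 ≤ t → x₀ + t • (Pi.single i 1 : Fin 3 → ℝ) ∈ F := by
        intro t ht
        have hvC : (t • (Pi.single i 1 : Fin 3 → ℝ)) ∈ C := by
          intro j
          simp only [Pi.smul_apply, smul_eq_mul, Pi.single_apply]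
          split
          · simpa using ht
          · simp
        have hmem : x₀ + t • (Pi.single i 1 : Fin 3 → ℝ) ∈ newtonPolyhedron f :=
          hadd _ hx₀P _ hvC
        have hval : l (x₀ + t • (Pi.single i 1 : Fin 3 → ℝ)) = m + t * l (Pi.single i 1) := by
          rw [map_add, map_smul, smul_eq_mul]
        rw [hlF]
        refine ⟨hmem, fun y hy => ?_⟩
        rw [hval]
        have := hmax y hy
        nlinarith
      obtain ⟨R, hR⟩ := isBounded_iff_forall_norm_le.1 hcomp.isBounded
      have hR0 : ‖x₀‖ ≤ R := hR _ hx₀F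
      set t : ℝ := R + ‖x₀‖ + 1 with htdef
      have ht : 0 ≤ t := by
        have := norm_nonneg x₀; linarith
      have hmem := hray t ht
      have h1 : ‖x₀ + t • (Pi.single i 1 : Fin 3 → ℝ)‖ ≤ R := hR _ hmem
      have h2 : (x₀ + t • (Pi.single i 1 : Fin 3 → ℝ)) i = x₀ i + t := by
        simp [Pi.single_apply]
      have h3 : |x₀ i + t| ≤ R := by
        have hle := norm_le_pi_norm (x₀ + t • (Pi.single i 1 : Fin 3 → ℝ)) i
        rw [h2, Real.norm_eq_abs] at hle
        linarith
      have h4 : |x₀ i| ≤ ‖x₀‖ := by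
        have := norm_le_pi_norm x₀ i
        rwa [Real.norm_eq_abs] at this
      have h5 : x₀ i + t ≤ R := (le_abs_self _).trans h3
      have h6 : -‖x₀‖ ≤ x₀ i := by
        have := neg_abs_le (x₀ i); linarith
      linarith
    by_cases hpm : l ![(0:ℝ), 0, (N : ℝ)] = m
    · rw [hlF]
      exact ⟨hpP, fun y hy => (hmax y hy).trans_eq hpm.symm⟩
    · exfalso
      set L : Set (Fin 3 → ℝ) := {x | x 2 = 0 ∧ l x = m} with hLdef
      have hLconv : Convex ℝ L := by
        intro x hx y hy a b ha hb hab
        constructor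
        · simp only [Pi.add_apply, Pi.smul_apply, smul_eq_mul]
          rw [hx.1, hy.1]; ring
        · rw [map_add, map_smul, map_smul, hx.2, hy.2, smul_eq_mul, smul_eq_mul,
            ← add_mul, hab, one_mul]
      have hSL : ∀ s ∈ S, l s = m → s ∈ L := by
        rintro s ⟨u, hu, rfl⟩ hls
        rcases hsupp u hu with h2 | h2
        · exact ⟨by simp [expR, h2], hls⟩
        · exact absurd (by rw [h2, hpe] at hls; exact hls) hpm
      have hFL : F ⊆ L := by
        intro x hx
        have hxm : l x = m := hFval x hx
        have hxP : x ∈ newtonPolyhedron f := by rw [hlF] at hx; exact hx.1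
        rw [hPeq] at hxP
        obtain ⟨q, hq, v, hv, rfl⟩ := Set.mem_add.1 hxP
        have hlv : l v ≤ 0 := by
          rw [lin_apply_eq_sum]
          apply Finset.sum_nonpos
          intro i _
          exact mul_nonpos_of_nonneg_of_nonpos (hv i) (hlneg i).le
        have hlq : l q ≤ m := hmax q (hQP hq)
        have hsplit : l q + l v = m := by rw [← map_add]; exact hxm
        have hlv0 : l v = 0 := by linarith
        have hveq : v = 0 := by
          have hsum : ∑ i, v i * l (Pi.single i 1) = 0 := by
            rw [← lin_apply_eq_sum]; exact hlv0
          have hz := (Finset.sum_eq_zero_iff_of_nonpos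
            (fun i _ => mul_nonpos_of_nonneg_of_nonpos (hv i) (hlneg i).le)).1 hsum
          funext i
          have hzi := hz i (Finset.mem_univ i)
          rcases mul_eq_zero.1 hzi with h | h
          · exact h
          · exact absurd h (hlneg i).ne
        rw [hveq, add_zero] at hxm ⊢
        have hlq' : l q = m := hxm
        rw [convexHull_eq] at hq
        obtain ⟨ι, t, w, z, hw0, hw1, hzS, hcm⟩ := hq
        have hsum : ∑ i ∈ t, w i * (m - l (z i)) = 0 := by
          have h1 : l q = ∑ i ∈ t, w i * l (z i) := by
            conv_lhs => rw [← hcm]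
            rw [Finset.centerMass_eq_of_sum_1 _ _ hw1, map_sum]
            exact Finset.sum_congr rfl fun i _ => by rw [map_smul, smul_eq_mul]
          simp_rw [mul_sub]
          rw [Finset.sum_sub_distrib, ← Finset.sum_mul, hw1, one_mul, ← h1, hlq', sub_self]
        have hterm : ∀ j ∈ t, 0 ≤ w j * (m - l (z j)) := fun j hj =>
          mul_nonneg (hw0 j hj)
            (sub_nonneg.2 (hmax _ (hQP (subset_convexHull ℝ S (hzS j hj)))))
        have hzm : ∀ i ∈ t, w i ≠ 0 → z i ∈ L := by
          intro i hi hwi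
          have hzi := (Finset.sum_eq_zero_iff_of_nonneg hterm).1 hsum i hi
          rcases mul_eq_zero.1 hzi with h | h
          · exact absurd h hwi
          · exact hSL _ (hzS i hi) (by linarith [sub_eq_zero.1 h])
        have hqL : q ∈ convexHull ℝ L := by
          rw [← hcm, ← Finset.centerMass_filter_ne_zero]
          apply Finset.centerMass_mem_convexHull
          · intro i hi; exact hw0 i (Finset.mem_filter.1 hi).1
          · rw [Finset.sum_filter_ne_zero, hw1]; exact zero_lt_one
          · intro i hi
            obtain ⟨hit, hwi⟩ := Finset.mem_filter.1 hi
            exact hzm i hit hwi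
        rwa [hLconv.convexHull_eq] at hqL
      -- dimension contradiction
      set l0 : ℝ := l (Pi.single 0 1) with hl0def
      set l1 : ℝ := l (Pi.single 1 1) with hl1def
      have hl1ne : l1 ≠ 0 := (hlneg 1).ne
      set w₀ : Fin 3 → ℝ := ![1, -l0 / l1, 0] with hw₀def
      have hspan : vectorSpan ℝ F ≤ Submodule.span ℝ {w₀} := by
        refine (vectorSpan_mono ℝ hFL).trans ?_
        rw [vectorSpan_def, Submodule.span_le]
        intro d hd
        obtain ⟨x, hx, y, hy, rfl⟩ := Set.mem_vsub.1 hd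
        rw [SetLike.mem_coe, Submodule.mem_span_singleton]
        refine ⟨(x - y) 0, ?_⟩
        have hd2 : (x - y) 2 = 0 := by
          simp only [Pi.sub_apply]; rw [hx.1, hy.1, sub_self]
        have hld : l (x - y) = 0 := by rw [map_sub, hx.2, hy.2, sub_self]
        have hexpand : (x - y) 0 * l0 + (x - y) 1 * l1 = 0 := by
          have h := hld
          rw [lin_apply_eq_sum, Fin.sum_univ_three] at h
          rw [hd2] at h
          rw [← hl0def, ← hl1def] at h
          linarith
        have hveq : x -ᵥ y = x - y := rfl
        rw [hveq]
        funext j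
        fin_cases j
        · simp [hw₀def]
        · show (x - y) 0 * w₀ 1 = (x - y) 1
          have hw1v : w₀ 1 = -l0 / l1 := by simp [hw₀def]
          rw [hw1v]
          simp only [Pi.sub_apply] at hexpand ⊢
          field_simp
          linarith
        · show (x - y) 0 * w₀ 2 = (x - y) 2
          have hw2v : w₀ 2 = 0 := by simp [hw₀def]
          rw [hw2v, hd2, mul_zero]
      have hw₀ne : w₀ ≠ 0 := by
        intro h
        have := congrFun h 0
        simp [hw₀def] at this
      have hle : Module.finrank ℝ (vectorSpan ℝ F) ≤
          Module.finrank ℝ (Submodule.span ℝ {w₀}) := Submodule.finrank_mono hspan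
      rw [finrank_span_singleton hw₀ne, hdim] at hle
      omega
  exact ⟨key, fun F F' h h' => ⟨![(0:ℝ), 0, (N : ℝ)], key F h, key F' h'⟩⟩
end
end
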